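/- Let φ : a ↦ ab, b ↦ a be the Fibonacci substitution and γ its two-sided periodic point of period 2 with seed b|a. Then rep_γ equals the Fibonacci analogue of the two's complement numeration system: for every n ∈ ℤ, rep_γ(n) = rep_{Fc}(n), where rep_{Fc}(n) is the unique odd-length binary word w = w_{k-1}⋯w_0 in D(DD)* avoiding factor 11 and not starting with 000 or 101, such that n = Σ_{i=0}^{k-1} w_i F_i − w_{k-1} F_k with Fibonacci numbers F_0 = 1, F_1 = 2, F_n = F_{n-1} + F_{n-2}. -/

import Mathlib

open Filter List

variable {A : Type*}

/-- A substitution applied to a word: concatenation of the images of its letters. -/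
def substW (η : A → List A) (w : List A) : List A := (w.map η).flatten

/-- The `k`-th iterate of a substitution applied to a word. -/
def iterW (η : A → List A) (k : ℕ) (w : List A) : List A := (substW η)^[k] w

/-- `η` is a substitution: nonempty images and at least one growing letter. -/
def IsSubstitution (η : A → List A) : Prop :=
  (∀ c, η c ≠ []) ∧ ∃ a, Tendsto (fun k => (iterW η k [a]).length) atTop atTop

/-- `(m i, a i)` for `i = 0, …, len-1` is an `x`-admissible sequence:
`m (i) ++ [a i]` is a prefix of `η (a (i+1))` and `m (len-1) ++ [a (len-1)]`
is a prefix of `η x`. -/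
def AdmSeq (η : A → List A) (len : ℕ) (m : ℕ → List A) (a : ℕ → A) (x : A) : Prop :=
  (∀ i, i + 1 < len → (m i ++ [a i]) <+: η (a (i + 1))) ∧
  (1 ≤ len → (m (len - 1) ++ [a (len - 1)]) <+: η x)

/-- `Σ_{j<k} |η^j(m_j)|`. -/
def sumLen (η : A → List A) (k : ℕ) (m : ℕ → List A) : ℕ :=
  ∑ j ∈ Finset.range k, (iterW η j (m j)).length

/-- `η^{k-1}(m_{k-1}) η^{k-2}(m_{k-2}) ⋯ η^0(m_0)`. -/
def concatDT (η : A → List A) (k : ℕ) (m : ℕ → List A) : List A :=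
  ((List.range k).reverse.map (fun j => iterW η j (m j))).flatten

/-- The digit word `|m_{k-1}| ⊙ |m_{k-2}| ⊙ ⋯ ⊙ |m_0|`. -/
def dtDigits (k : ℕ) (m : ℕ → List A) : List ℕ :=
  (List.range k).reverse.map (fun j => (m j).length)

/-- Partial run of the automaton `A_{η,x}`: from state `x`, the digit `d`
moves to the `d`-th letter of `η x` when `d < |η x|`. -/
def run (η : A → List A) : List ℕ → A → Option A
  | [], x => some x
  | d :: w, x => if h : d < (η x).length then run η w ((η x)[d]) else none

/-- `u` restricted to nonnegative positions is a periodic point of `η` of period `p`: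
every `η^p`-image of a prefix of `u` is again a prefix of `u`. -/
def RightPer (η : A → List A) (p : ℕ) (u : ℤ → A) : Prop :=
  ∀ n : ℕ, ∀ j : ℕ, j < (iterW η p (List.ofFn (fun i : Fin (n+1) => u i))).length →
    (iterW η p (List.ofFn (fun i : Fin (n+1) => u i)))[j]? = some (u j)

/-- `u` restricted to negative positions is a periodic point of `η` of period `p`:
every `η^p`-image of a suffix `u_{-(n+1)} ⋯ u_{-1}` of the left part is again a
suffix of the left part of `u`. -/
def LeftPer (η : A → List A) (p : ℕ) (u : ℤ → A) : Prop :=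
  ∀ n : ℕ, ∀ j : ℕ,
    j < (iterW η p (List.ofFn (fun i : Fin (n+1) => u ((i : ℤ) - (n+1))))).length →
    (iterW η p (List.ofFn (fun i : Fin (n+1) => u ((i : ℤ) - (n+1)))))[j]? =
      some (u ((j : ℤ) -
        (iterW η p (List.ofFn (fun i : Fin (n+1) => u ((i : ℤ) - (n+1))))).length))

/-- `u : ℤ → A` is a two-sided periodic point of `η` of period `p ≥ 1` with
growing seed `u₋₁ | u₀`. -/
def TwoSidedPerPoint (η : A → List A) (p : ℕ) (u : ℤ → A) : Prop :=
  1 ≤ p ∧ RightPer η p u ∧ LeftPer η p u ∧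
  Tendsto (fun k => (iterW η k [u 0]).length) atTop atTop ∧
  Tendsto (fun k => (iterW η k [u (-1)]).length) atTop atTop

/-- The Dumont–Thomas decomposition data of a positive integer `n` with respect to
the letter `x` (Theorem of Dumont–Thomas for the right-infinite part):
`p ∣ k`, `p ≤ k`, the sequence is `x`-admissible, `m_{k-1} ⋯ m_{k-p} ≠ ε` and
`Σ_{j<k} |η^j(m_j)| = n`. -/
def PosSpec (η : A → List A) (p : ℕ) (x : A) (n : ℤ) (k : ℕ) (m : ℕ → List A)
    (a : ℕ → A) : Prop :=
  p ∣ k ∧ p ≤ k ∧ AdmSeq η k m a x ∧ (∃ i, i < p ∧ m (k - 1 - i) ≠ []) ∧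
  (sumLen η k m : ℤ) = n

/-- The Dumont–Thomas decomposition data of an integer `n ≤ -2` with respect to
the letter `b` (Theorem of Dumont–Thomas for the left-infinite part). -/
def NegSpec (η : A → List A) (p : ℕ) (b : A) (n : ℤ) (k : ℕ) (m : ℕ → List A)
    (a : ℕ → A) : Prop :=
  p ∣ k ∧ p ≤ k ∧ AdmSeq η k m a b ∧
  ((List.range p).map (fun i => iterW η (p - 1 - i) (m (k - 1 - i)))).flatten
      ++ [a (k - p)] ≠ iterW η p [b] ∧
  (sumLen η k m : ℤ) = n + (iterW η k [b]).length

/-- `w` is the Dumont–Thomas complement representation `rep_u(n)` of `n ∈ ℤ`. -/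
def RepSpec (η : A → List A) (p : ℕ) (u : ℤ → A) (n : ℤ) (w : List ℕ) : Prop :=
  (n = 0 ∧ w = [0]) ∨ (n = -1 ∧ w = [1]) ∨
  (1 ≤ n ∧ ∃ k m a, PosSpec η p (u 0) n k m a ∧ w = 0 :: dtDigits k m) ∨
  (n ≤ -2 ∧ ∃ k m a, NegSpec η p (u (-1)) n k m a ∧ w = 1 :: dtDigits k m)

/-- Run of the automaton `A_{η,s}` with initial state `start`: the first digit
`0` (resp. `1`) moves to `u 0` (resp. `u (-1)`). -/
def runSeed (η : A → List A) (u : ℤ → A) : List ℕ → Option A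
  | [] => none
  | d :: w => if d = 0 then run η w (u 0) else if d = 1 then run η w (u (-1)) else none

/-- `|η^{k-p-1}(m_{k-1}) ⋯ η^0(m_p)|`, the `u`-quotient of a positive integer. -/
def uQuotPos (η : A → List A) (p k : ℕ) (m : ℕ → List A) : ℤ :=
  ∑ j ∈ Finset.range (k - p), ((iterW η j (m (j + p))).length : ℤ)

/-- `w = tail_{η,p,x}(n)`: the digit word of the unique `x`-admissible sequence of
length `p` whose length-sum is `n`. -/
def TailSpec (η : A → List A) (p : ℕ) (x : A) (n : ℕ) (w : List ℕ) : Prop :=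
  ∃ m a, AdmSeq η p m a x ∧ sumLen η p m = n ∧ w = dtDigits p m

/-- Radix order: shorter words first, ties broken lexicographically. -/
def radLt (v w : List ℕ) : Prop :=
  v.length < w.length ∨ (v.length = w.length ∧ List.Lex (· < ·) v w)

/-- Reversed-radix order: longer words first, ties broken lexicographically. -/
def revLt (v w : List ℕ) : Prop :=
  w.length < v.length ∨ (v.length = w.length ∧ List.Lex (· < ·) v w)

/-- The total order `≺` on `{0,1}D*`. -/
def precLt (v w : List ℕ) : Prop :=
  (v.head? = some 1 ∧ w.head? = some 0) ∨
  (v.head? = some 0 ∧ w.head? = some 0 ∧ radLt v w) ∨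
  (v.head? = some 1 ∧ w.head? = some 1 ∧ revLt v w)

/-- The base-2 value `Σ_{i<k} w_i 2^i` of the word `w = w_{k-1} ⋯ w_0`. -/
def natVal2 (w : List ℕ) : ℕ := w.foldl (fun acc d => 2 * acc + d) 0

/-- The two's complement value `Σ_{i<k} w_i 2^i − w_{k-1} 2^k`. -/
def val2c (w : List ℕ) : ℤ := (natVal2 w : ℤ) - (w.headI : ℤ) * 2 ^ w.length

/-- Fibonacci numbers with `F 0 = 1`, `F 1 = 2`. -/
def fib2 : ℕ → ℕ
  | 0 => 1
  | 1 => 2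
  | n + 2 => fib2 (n + 1) + fib2 n

/-- The Fibonacci complement value `Σ_{i<k} w_i F_i − w_{k-1} F_k`
of the word `w = w_{k-1} ⋯ w_0`. -/
def valFc (w : List ℕ) : ℤ :=
  (∑ i ∈ Finset.range w.length, (w.reverse.getD i 0 : ℤ) * fib2 i) -
    (w.headI : ℤ) * fib2 w.length


/-! ### Auxiliary lemmas -/

section AuxBasic

variable {A : Type*}

lemma substW_nil (η : A → List A) : substW η [] = [] := rfl

lemma substW_append (η : A → List A) (u v : List A) :
    substW η (u ++ v) = substW η u ++ substW η v := by
  simp [substW]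

lemma substW_singleton (η : A → List A) (c : A) : substW η [c] = η c := by
  simp [substW]

lemma iterW_zero (η : A → List A) (w : List A) : iterW η 0 w = w := rfl

lemma iterW_succ (η : A → List A) (k : ℕ) (w : List A) :
    iterW η (k + 1) w = iterW η k (substW η w) := Function.iterate_succ_apply _ _ _

lemma iterW_nil (η : A → List A) (k : ℕ) : iterW η k [] = [] := by
  induction k with
  | zero => rfl
  | succ k ih => rw [iterW_succ, substW_nil]; exact ih

lemma iterW_append (η : A → List A) (k : ℕ) (u v : List A) :
    iterW η k (u ++ v) = iterW η k u ++ iterW η k v := by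
  induction k generalizing u v with
  | zero => rfl
  | succ k ih => rw [iterW_succ, substW_append, ih, iterW_succ, iterW_succ]

lemma fib2_add_two (n : ℕ) : fib2 (n + 2) = fib2 (n + 1) + fib2 n := rfl

lemma fib2_pos : ∀ n, 0 < fib2 n
  | 0 => one_pos
  | 1 => two_pos
  | n + 2 => by rw [fib2_add_two]; exact Nat.add_pos_left (fib2_pos (n + 1)) _

lemma sum_fib2 (t : ℕ) : (∑ j ∈ Finset.range t, fib2 j) + 2 = fib2 (t + 1) := by
  induction t with
  | zero => rfl
  | succ t ih => rw [Finset.sum_range_succ, fib2_add_two, ← ih]; ring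

lemma lenA {a b : A} {φ : A → List A} (hφa : φ a = [a, b]) (hφb : φ b = [a]) :
    ∀ j, (iterW φ j [a]).length = fib2 j
  | 0 => rfl
  | 1 => by rw [iterW_succ, substW_singleton, hφa]; rfl
  | (j + 2) => by
    rw [iterW_succ, substW_singleton, hφa,
      show ([a, b] : List A) = [a] ++ [b] from rfl, iterW_append, List.length_append,
      lenA hφa hφb (j + 1), iterW_succ, substW_singleton, hφb, lenA hφa hφb j,
      fib2_add_two]

lemma lenB {a b : A} {φ : A → List A} (hφa : φ a = [a, b]) (hφb : φ b = [a]) (j : ℕ) :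
    (iterW φ (j + 1) [b]).length = fib2 j := by
  rw [iterW_succ, substW_singleton, hφb]; exact lenA hφa hφb j

end AuxBasic


section AuxList

variable {A : Type*}

lemma prefix_pair {a b c : A} {m : List A} (h : m ++ [c] <+: [a, b]) :
    (m = [] ∧ c = a) ∨ (m = [a] ∧ c = b) := by
  have hl := h.length_le
  simp at hl
  rcases m with _ | ⟨d, _ | ⟨e, t⟩⟩
  · left
    simp only [List.nil_append, List.cons_prefix_cons] at h
    exact ⟨rfl, h.1⟩
  · right
    simp only [List.cons_append, List.nil_append, List.cons_prefix_cons] at h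
    obtain ⟨rfl, h2, -⟩ := h
    exact ⟨rfl, h2⟩
  · simp at hl

lemma prefix_single {a c : A} {m : List A} (h : m ++ [c] <+: [a]) :
    m = [] ∧ c = a := by
  have hl := h.length_le
  simp at hl
  rcases m with _ | ⟨d, t⟩
  · simp only [List.nil_append, List.cons_prefix_cons] at h
    exact ⟨rfl, h.1⟩
  · simp at hl

lemma infix_pair_intro {l : List ℕ} {i : ℕ} (h : i + 1 < l.length) :
    [l.getD i 0, l.getD (i + 1) 0] <:+: l := by
  have h1 : i < l.length := by omega
  have hd : l.drop i = l.getD i 0 :: l.getD (i + 1) 0 :: l.drop (i + 2) := by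
    rw [List.getD_eq_getElem l 0 h1, List.getD_eq_getElem l 0 h,
      List.drop_eq_getElem_cons h1, List.drop_eq_getElem_cons h]
  have hpre : [l.getD i 0, l.getD (i + 1) 0] <+: l.drop i := ⟨l.drop (i + 2), hd.symm⟩
  exact hpre.isInfix.trans (l.drop_suffix i).isInfix

lemma infix_pair_elim {x y : ℕ} {l : List ℕ} (h : [x, y] <:+: l) :
    ∃ i, i + 1 < l.length ∧ l.getD i 0 = x ∧ l.getD (i + 1) 0 = y := by
  obtain ⟨s, t, rfl⟩ := h
  have hlen : s.length + 1 < (s ++ [x, y] ++ t).length := by simp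
  refine ⟨s.length, hlen, ?_, ?_⟩
  · rw [List.append_assoc, List.getD_append_right _ _ _ _ (le_refl _)]
    simp
  · rw [List.append_assoc, List.getD_append_right _ _ _ _ (by omega)]
    have : s.length + 1 - s.length = 1 := by omega
    rw [this]
    simp

lemma dtDigits_length (k : ℕ) (m : ℕ → List A) : (dtDigits k m).length = k := by
  simp [dtDigits]

lemma dtDigits_reverse (k : ℕ) (m : ℕ → List A) :
    (dtDigits k m).reverse = (List.range k).map (fun j => (m j).length) := by
  simp [dtDigits]

lemma dtDigits_rev_getD (k : ℕ) (m : ℕ → List A) {j : ℕ} (hj : j < k) :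
    (dtDigits k m).reverse.getD j 0 = (m j).length := by
  rw [dtDigits_reverse, List.getD_eq_getElem _ 0 (by simpa using hj)]
  simp

lemma dtDigits_getD (k : ℕ) (m : ℕ → List A) {r : ℕ} (hr : r < k) :
    (dtDigits k m).getD r 0 = (m (k - 1 - r)).length := by
  have this1 : dtDigits k m = ((List.range k).map (fun j => (m j).length)).reverse := by
    rw [← dtDigits_reverse, List.reverse_reverse]
  rw [this1, List.getD_eq_getElem _ 0 (by simpa using hr), List.getElem_reverse]
  simp

lemma dtDigits_succ (k : ℕ) (m : ℕ → List A) :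
    dtDigits (k + 1) m = (m k).length :: dtDigits k m := by
  simp [dtDigits, List.range_succ]

lemma valFc_cons (c : ℕ) (ds : List ℕ) :
    valFc (c :: ds) =
      (∑ j ∈ Finset.range ds.length, (ds.reverse.getD j 0 : ℤ) * fib2 j)
        + (c : ℤ) * fib2 ds.length - (c : ℤ) * fib2 (ds.length + 1) := by
  unfold valFc
  have h1 : (c :: ds).length = ds.length + 1 := rfl
  have hrev : (c :: ds).reverse = ds.reverse ++ [c] := by simp
  rw [h1, Finset.sum_range_succ, hrev]
  have hA : ∀ j ∈ Finset.range ds.length,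
      ((ds.reverse ++ [c]).getD j 0 : ℤ) * fib2 j = (ds.reverse.getD j 0 : ℤ) * fib2 j := by
    intro j hj
    rw [Finset.mem_range] at hj
    rw [List.getD_append _ _ _ _ (by simpa using hj)]
  rw [Finset.sum_congr rfl hA]
  have hB : (ds.reverse ++ [c]).getD ds.length 0 = c := by
    rw [List.getD_append_right _ _ _ _ (by simp)]
    simp
  rw [hB]
  simp [List.headI]

end AuxList


section AuxAdm

variable {A : Type*} {a b : A} {φ : A → List A}

lemma adm_struct (hφa : φ a = [a, b]) (hφb : φ b = [a]) {k : ℕ} {m : ℕ → List A}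
    {am : ℕ → A} {x : A} (hadm : AdmSeq φ k m am x) (hx : x = a ∨ x = b) :
    ∀ i, i < k → (m i = [] ∧ am i = a) ∨ (m i = [a] ∧ am i = b) := by
  have key : ∀ j, j < k →
      (m (k - 1 - j) = [] ∧ am (k - 1 - j) = a) ∨
        (m (k - 1 - j) = [a] ∧ am (k - 1 - j) = b) := by
    intro j
    induction j with
    | zero =>
      intro hj
      have h2 := hadm.2 (by omega)
      rcases hx with rfl | rfl
      · rw [hφa] at h2; exact prefix_pair h2
      · rw [hφb] at h2; exact Or.inl (prefix_single h2)
    | succ j ih =>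
      intro hj
      have hIH := ih (by omega)
      have heq : k - 1 - j = (k - 1 - (j + 1)) + 1 := by omega
      have h1 := hadm.1 (k - 1 - (j + 1)) (by omega)
      rw [heq] at hIH
      rcases hIH with ⟨-, hA⟩ | ⟨-, hB⟩
      · rw [hA, hφa] at h1; exact prefix_pair h1
      · rw [hB, hφb] at h1; exact Or.inl (prefix_single h1)
  intro i hi
  have h := key (k - 1 - i) (by omega)
  have heq : k - 1 - (k - 1 - i) = i := by omega
  rwa [heq] at h

lemma adm_no11 (hφa : φ a = [a, b]) (hφb : φ b = [a]) {k : ℕ} {m : ℕ → List A}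
    {am : ℕ → A} {x : A} (hadm : AdmSeq φ k m am x) (hx : x = a ∨ x = b) :
    ∀ i, i + 1 < k → m (i + 1) = [a] → m i = [] := by
  intro i hi h1
  rcases adm_struct hφa hφb hadm hx (i + 1) hi with ⟨h, -⟩ | ⟨-, hb2⟩
  · rw [h1] at h; simp at h
  · have h2 := hadm.1 i hi
    rw [hb2, hφb] at h2
    exact (prefix_single h2).1

lemma sumLen_eq (hφa : φ a = [a, b]) (hφb : φ b = [a]) {k : ℕ} {m : ℕ → List A}
    (hm : ∀ j, j < k → m j = [] ∨ m j = [a]) :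
    sumLen φ k m = ∑ j ∈ Finset.range k, (m j).length * fib2 j := by
  unfold sumLen
  refine Finset.sum_congr rfl fun j hj => ?_
  rw [Finset.mem_range] at hj
  rcases hm j hj with h | h <;> rw [h]
  · simp [iterW_nil]
  · simp [lenA hφa hφb]

lemma valFc_spec (hφa : φ a = [a, b]) (hφb : φ b = [a]) {k : ℕ} {m : ℕ → List A}
    (hm : ∀ j, j < k → m j = [] ∨ m j = [a]) (c : ℕ) :
    valFc (c :: dtDigits k m) =
      (sumLen φ k m : ℤ) + (c : ℤ) * fib2 k - (c : ℤ) * fib2 (k + 1) := by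
  have hcongr : ∀ j ∈ Finset.range k,
      ((dtDigits k m).reverse.getD j 0 : ℤ) * fib2 j = ((m j).length : ℤ) * fib2 j := by
    intro j hj
    rw [dtDigits_rev_getD k m (Finset.mem_range.1 hj)]
  rw [valFc_cons, dtDigits_length, Finset.sum_congr rfl hcongr, sumLen_eq hφa hφb hm]
  push_cast
  ring

lemma valFc_single (c : ℕ) : valFc [c] = -(c : ℤ) := by
  simp [valFc, Finset.sum_range_succ, fib2, List.headI]
  ring

lemma iterW_two_b (hφa : φ a = [a, b]) (hφb : φ b = [a]) : iterW φ 2 [b] = [a, b] := by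
  rw [show (2 : ℕ) = 1 + 1 from rfl, iterW_succ, substW_singleton, hφb, iterW_succ,
    substW_singleton, hφa, iterW_zero]

end AuxAdm


lemma negspec_exc_eq {A : Type*} (φ : A → List A) (m : ℕ → List A) (am : ℕ → A) (k2 : ℕ) :
    ((List.range 2).map (fun i => iterW φ (2 - 1 - i) (m (k2 + 2 - 1 - i)))).flatten
      ++ [am (k2 + 2 - 2)] = iterW φ 1 (m (k2 + 1)) ++ (m k2 ++ [am k2]) := by
  have e0 : k2 + 2 - 1 - 0 = k2 + 1 := by omega
  have e1 : k2 + 2 - 1 - 1 = k2 := by omega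
  have e2 : k2 + 2 - 2 = k2 := by omega
  rw [show List.range 2 = [0, 1] from rfl]
  simp [e0, e1, e2, iterW_zero]

/-- For the Fibonacci substitution `φ : a ↦ ab, b ↦ a` and its
two-sided periodic point `γ` of period 2 with seed `b|a`, the numeration system
`rep_γ` is the Fibonacci analogue of the two's complement numeration system:
`rep_γ(n)` is the unique odd-length binary word avoiding the factor `11`, not
starting with `000` nor `101`, whose value `Σ w_i F_i − w_{k-1} F_k` is `n`. -/
theorem rep_eq_fib_complement [Finite A] (a b : A) (hab : a ≠ b)
    (φ : A → List A) (hφa : φ a = [a, b]) (hφb : φ b = [a])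
    (γ : ℤ → A) (hγ : TwoSidedPerPoint φ 2 γ)
    (hseed : γ (-1) = b ∧ γ 0 = a) :
    ∀ (n : ℤ) (w : List ℕ),
      RepSpec φ 2 γ n w ↔
        ((∀ d ∈ w, d < 2) ∧ Odd w.length ∧
          ¬ ([1, 1] <:+: w) ∧ ¬ ([0, 0, 0] <+: w) ∧ ¬ ([1, 0, 1] <+: w) ∧
          valFc w = n) := by
  obtain ⟨hγm1, hγ0⟩ := hseed
  intro n w
  constructor
  · intro hrep
    rcases hrep with ⟨rfl, rfl⟩ | ⟨rfl, rfl⟩ | ⟨hn, k, m, am, hps, rfl⟩ |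
      ⟨hn, k, m, am, hns, rfl⟩
    · refine ⟨by simp, ⟨0, by simp⟩, ?_, ?_, ?_, by simpa using valFc_single 0⟩
      · intro h; have := h.length_le; simp at this
      · intro h; have := h.length_le; simp at this
      · intro h; have := h.length_le; simp at this
    · refine ⟨by simp, ⟨0, by simp⟩, ?_, ?_, ?_, by simpa using valFc_single 1⟩
      · intro h; have := h.length_le; simp at this
      · intro h; have := h.length_le; simp at this
      · intro h; have := h.length_le; simp at this
    · -- positive case
      obtain ⟨hdvd, hk2, hadm, hnz, hsum⟩ := hps
      rw [hγ0] at hadm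
      have hx : a = a ∨ a = b := Or.inl rfl
      have hst := adm_struct hφa hφb hadm hx
      have hm : ∀ j, j < k → m j = [] ∨ m j = [a] := fun j hj =>
        (hst j hj).imp And.left And.left
      obtain ⟨k2, rfl⟩ : ∃ k2, k = k2 + 2 := ⟨k - 2, by omega⟩
      refine ⟨?_, ?_, ?_, ?_, ?_, ?_⟩
      · intro d hd
        rcases List.mem_cons.1 hd with rfl | hd
        · omega
        · simp only [dtDigits, List.mem_map, List.mem_reverse, List.mem_range] at hd
          obtain ⟨j, hj, rfl⟩ := hd
          rcases hm j hj with h | h <;> simp [h]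
      · obtain ⟨t, ht⟩ := hdvd
        exact ⟨t, by simp [dtDigits_length]; omega⟩
      · intro hinf
        obtain ⟨i, hi, h1, h2⟩ := infix_pair_elim hinf
        simp only [List.length_cons, dtDigits_length] at hi
        match i, hi, h1, h2 with
        | 0, hi, h1, h2 => simp at h1
        | (r+1), hi, h1, h2 =>
          rw [List.getD_cons_succ] at h1 h2
          rw [dtDigits_getD _ m (show r < k2 + 2 by omega)] at h1
          rw [dtDigits_getD _ m (show r + 1 < k2 + 2 by omega)] at h2
          rw [show k2 + 2 - 1 - r = k2 + 1 - r from by omega] at h1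
          rw [show k2 + 2 - 1 - (r + 1) = k2 - r from by omega] at h2
          have e1 : m (k2 + 1 - r) = [a] := by
            rcases hm _ (show k2 + 1 - r < k2 + 2 by omega) with h | h
            · rw [h] at h1; simp at h1
            · exact h
          have e2 : m (k2 - r) = [a] := by
            rcases hm _ (show k2 - r < k2 + 2 by omega) with h | h
            · rw [h] at h2; simp at h2
            · exact h
          have e3 := adm_no11 hφa hφb hadm hx (k2 - r) (by omega)
            (by rw [show k2 - r + 1 = k2 + 1 - r from by omega]; exact e1)
          rw [e3] at e2; simp at e2
      · intro hpre
        rw [dtDigits_succ, dtDigits_succ] at hpre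
        simp only [List.cons_prefix_cons] at hpre
        obtain ⟨-, h1, h2, -⟩ := hpre
        obtain ⟨i, hi, hne⟩ := hnz
        interval_cases i
        · apply hne
          rw [show k2 + 2 - 1 - 0 = k2 + 1 from by omega]
          exact List.length_eq_zero_iff.mp h1.symm
        · apply hne
          rw [show k2 + 2 - 1 - 1 = k2 from by omega]
          exact List.length_eq_zero_iff.mp h2.symm
      · intro hpre
        simp only [List.cons_prefix_cons] at hpre
        exact absurd hpre.1 one_ne_zero
      · rw [valFc_spec hφa hφb hm 0]
        simpa using hsum
    · -- negative case
      obtain ⟨hdvd, hk2, hadm, hexc, hsum⟩ := hns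
      rw [hγm1] at hadm hexc hsum
      have hx : b = a ∨ b = b := Or.inr rfl
      have hst := adm_struct hφa hφb hadm hx
      have hm : ∀ j, j < k → m j = [] ∨ m j = [a] := fun j hj =>
        (hst j hj).imp And.left And.left
      obtain ⟨k2, rfl⟩ : ∃ k2, k = k2 + 2 := ⟨k - 2, by omega⟩
      have hm1 : m (k2 + 1) = [] := by
        have h2 := hadm.2 (by omega)
        rw [show k2 + 2 - 1 = k2 + 1 from by omega, hφb] at h2
        exact (prefix_single h2).1
      have hm2 : m k2 = [] := by
        rcases hst k2 (by omega) with ⟨h, -⟩ | ⟨hma, hab⟩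
        · exact h
        · exfalso
          apply hexc
          rw [negspec_exc_eq, hm1, iterW_nil, hma, hab, iterW_two_b hφa hφb]
          rfl
      have ham2 : am k2 = a := by
        rcases hst k2 (by omega) with ⟨-, h⟩ | ⟨h, -⟩
        · exact h
        · rw [hm2] at h; simp at h
      refine ⟨?_, ?_, ?_, ?_, ?_, ?_⟩
      · intro d hd
        rcases List.mem_cons.1 hd with rfl | hd
        · omega
        · simp only [dtDigits, List.mem_map, List.mem_reverse, List.mem_range] at hd
          obtain ⟨j, hj, rfl⟩ := hd
          rcases hm j hj with h | h <;> simp [h]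
      · obtain ⟨t, ht⟩ := hdvd
        exact ⟨t, by simp [dtDigits_length]; omega⟩
      · intro hinf
        obtain ⟨i, hi, h1, h2⟩ := infix_pair_elim hinf
        simp only [List.length_cons, dtDigits_length] at hi
        match i, hi, h1, h2 with
        | 0, hi, h1, h2 =>
          rw [show (0:ℕ) + 1 = 1 from rfl, List.getD_cons_succ] at h2
          rw [dtDigits_getD _ m (show 0 < k2 + 2 by omega),
            show k2 + 2 - 1 - 0 = k2 + 1 from by omega, hm1] at h2
          simp at h2
        | (r+1), hi, h1, h2 =>
          rw [List.getD_cons_succ] at h1 h2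
          rw [dtDigits_getD _ m (show r < k2 + 2 by omega)] at h1
          rw [dtDigits_getD _ m (show r + 1 < k2 + 2 by omega)] at h2
          rw [show k2 + 2 - 1 - r = k2 + 1 - r from by omega] at h1
          rw [show k2 + 2 - 1 - (r + 1) = k2 - r from by omega] at h2
          have e1 : m (k2 + 1 - r) = [a] := by
            rcases hm _ (show k2 + 1 - r < k2 + 2 by omega) with h | h
            · rw [h] at h1; simp at h1
            · exact h
          have e2 : m (k2 - r) = [a] := by
            rcases hm _ (show k2 - r < k2 + 2 by omega) with h | h
            · rw [h] at h2; simp at h2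
            · exact h
          have e3 := adm_no11 hφa hφb hadm hx (k2 - r) (by omega)
            (by rw [show k2 - r + 1 = k2 + 1 - r from by omega]; exact e1)
          rw [e3] at e2; simp at e2
      · intro hpre
        simp only [List.cons_prefix_cons] at hpre
        exact absurd hpre.1 zero_ne_one
      · intro hpre
        rw [dtDigits_succ, dtDigits_succ] at hpre
        simp only [List.cons_prefix_cons] at hpre
        obtain ⟨-, -, h2, -⟩ := hpre
        rw [hm2] at h2
        simp at h2
      · rw [valFc_spec hφa hφb hm 1]
        rw [show k2 + 2 = k2 + 1 + 1 from by omega, lenB hφa hφb] at hsum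
        have hf : fib2 (k2 + 1 + 1 + 1) = fib2 (k2 + 1 + 1) + fib2 (k2 + 1) := by
          rw [show k2 + 1 + 1 + 1 = k2 + 1 + 2 from by omega]
          exact fib2_add_two (k2 + 1)
        rw [show k2 + 2 = k2 + 1 + 1 from by omega]
        push_cast [hf]
        omega
  · rintro ⟨hd2, hodd, h11, h000, h101, hval⟩
    rcases w with _ | ⟨c, _ | ⟨e1, _ | ⟨e2, ds'⟩⟩⟩
    · norm_num at hodd
    · -- w = [c]
      have hc : c < 2 := hd2 c (by simp)
      rw [valFc_single] at hval
      interval_cases c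
      · exact Or.inl ⟨by push_cast at hval; omega, rfl⟩
      · exact Or.inr (Or.inl ⟨by push_cast at hval; omega, rfl⟩)
    · -- w = [c, e1] : even length, impossible
      simp [Nat.odd_iff] at hodd
    · -- main case
      set t := ds'.length with ht
      set ds : List ℕ := e1 :: e2 :: ds' with hds
      have hc : c < 2 := hd2 c (by simp)
      have he1lt : e1 < 2 := hd2 e1 (by rw [hds]; simp)
      have he2lt : e2 < 2 := hd2 e2 (by rw [hds]; simp)
      have hlen : ds.length = t + 2 := by rw [hds]; simp [ht]
      set D : ℕ → ℕ := fun j => ds.getD (t + 1 - j) 0 with hD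
      set m : ℕ → List A := fun j => if D j = 1 then [a] else [] with hmdef
      set am : ℕ → A := fun j => if D j = 1 then b else a with hamdef
      have hm : ∀ j, m j = [] ∨ m j = [a] := by
        intro j; by_cases h : D j = 1
        · right; simp only [hmdef]; rw [if_pos h]
        · left; simp only [hmdef]; rw [if_neg h]
      have hD2 : ∀ j, D j < 2 := by
        intro j
        have hlt : t + 1 - j < ds.length := by omega
        simp only [hD]
        rw [List.getD_eq_getElem _ 0 hlt]
        exact hd2 _ (List.mem_cons_of_mem c (List.getElem_mem hlt))
      have hDtop : D (t + 1) = e1 := by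
        simp only [hD]
        rw [show t + 1 - (t + 1) = 0 from by omega, hds]
        rfl
      have hDsec : D t = e2 := by
        simp only [hD]
        rw [show t + 1 - t = 1 from by omega, hds]
        rfl
      have hadj : ∀ i, i + 1 < t + 2 → D (i + 1) = 1 → D i = 1 → False := by
        intro i hi h1 h0
        apply h11
        have hp := infix_pair_intro (l := ds) (i := t - i) (by rw [hlen]; omega)
        rw [show t - i + 1 = t + 1 - i from by omega] at hp
        have ee1 : ds.getD (t - i) 0 = D (i + 1) := by
          simp only [hD]
          rw [show t + 1 - (i + 1) = t - i from by omega]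
        have ee2 : ds.getD (t + 1 - i) 0 = D i := by simp only [hD]
        rw [ee1, ee2, h1, h0] at hp
        exact hp.trans (List.suffix_cons c ds).isInfix
      have hdig : dtDigits (t + 2) m = ds := by
        apply List.ext_getElem (by rw [dtDigits_length, hlen])
        intro r h1 h2
        rw [← List.getD_eq_getElem _ 0 h1, ← List.getD_eq_getElem _ 0 h2]
        have hr : r < t + 2 := by rw [dtDigits_length] at h1; exact h1
        rw [dtDigits_getD _ m hr, show t + 2 - 1 - r = t + 1 - r from by omega]
        have key : ds.getD r 0 = D (t + 1 - r) := by
          simp only [hD]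
          rw [show t + 1 - (t + 1 - r) = r from by omega]
        rw [key]
        by_cases h : D (t + 1 - r) = 1
        · simp only [hmdef]; rw [if_pos h, h]; rfl
        · have := hD2 (t + 1 - r)
          simp only [hmdef]; rw [if_neg h]
          simp; omega
      have hadm1 : ∀ i, i + 1 < t + 2 → (m i ++ [am i]) <+: φ (am (i + 1)) := by
        intro i hi
        by_cases h1 : D (i + 1) = 1
        · have h0 : D i ≠ 1 := fun h0 => hadj i hi h1 h0
          simp only [hmdef, hamdef]
          rw [if_pos h1, if_neg h0, if_neg h0, hφb]
          exact List.prefix_rfl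
        · simp only [hmdef, hamdef]
          rw [if_neg h1, hφa]
          by_cases h0 : D i = 1
          · rw [if_pos h0, if_pos h0]
            exact List.prefix_rfl
          · rw [if_neg h0, if_neg h0]
            exact ⟨[b], rfl⟩
      have hmall : ∀ j, j < t + 2 → m j = [] ∨ m j = [a] := fun j _ => hm j
      have hsumval : valFc ((c : ℕ) :: ds) =
          (sumLen φ (t + 2) m : ℤ) + (c : ℤ) * fib2 (t + 2) - (c : ℤ) * fib2 (t + 2 + 1) := by
        rw [← hdig, valFc_spec hφa hφb hmall c]
      have hdvd : 2 ∣ t + 2 := by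
        obtain ⟨s, hs⟩ := hodd
        simp only [List.length_cons, hlen] at hs
        exact ⟨s, by omega⟩
      interval_cases c
      · -- positive case
        have hnz : ∃ i, i < 2 ∧ m (t + 2 - 1 - i) ≠ [] := by
          by_cases he1 : e1 = 0
          · have he2 : e2 ≠ 0 := by
              intro he2
              refine h000 ?_
              rw [hds, he1, he2]
              exact ⟨ds', rfl⟩
            refine ⟨1, by omega, ?_⟩
            rw [show t + 2 - 1 - 1 = t from by omega]
            have hv : D t = 1 := by rw [hDsec]; omega
            simp only [hmdef]; rw [if_pos hv]; simp
          · refine ⟨0, by omega, ?_⟩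
            rw [show t + 2 - 1 - 0 = t + 1 from by omega]
            have hv : D (t + 1) = 1 := by rw [hDtop]; omega
            simp only [hmdef]; rw [if_pos hv]; simp
        have hadm : AdmSeq φ (t + 2) m am a := by
          refine ⟨hadm1, fun _ => ?_⟩
          rw [show t + 2 - 1 = t + 1 from by omega, hφa]
          by_cases h1 : D (t + 1) = 1
          · simp only [hmdef, hamdef]; rw [if_pos h1, if_pos h1]
            exact List.prefix_rfl
          · simp only [hmdef, hamdef]; rw [if_neg h1, if_neg h1]
            exact ⟨[b], rfl⟩
        have hsum : (sumLen φ (t + 2) m : ℤ) = n := by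
          rw [← hval, hsumval]
          push_cast
          ring
        have hge : 1 ≤ sumLen φ (t + 2) m := by
          obtain ⟨i, hi2, hne⟩ := hnz
          have hj0 : t + 2 - 1 - i < t + 2 := by omega
          have hmj : m (t + 2 - 1 - i) = [a] := (hm _).resolve_left hne
          rw [sumLen_eq hφa hφb hmall]
          calc 1 ≤ (m (t + 2 - 1 - i)).length * fib2 (t + 2 - 1 - i) := by
                rw [hmj, List.length_singleton, Nat.one_mul]; exact fib2_pos _
            _ ≤ ∑ j ∈ Finset.range (t + 2), (m j).length * fib2 j :=
                Finset.single_le_sum (f := fun j => (m j).length * fib2 j)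
                  (fun i _ => Nat.zero_le _) (Finset.mem_range.2 hj0)
        refine Or.inr (Or.inr (Or.inl ⟨by omega, t + 2, m, am, ?_, by rw [hdig]⟩))
        rw [hγ0]
        exact ⟨hdvd, by omega, hadm, hnz, hsum⟩
      · -- negative case
        have he1' : e1 = 0 := by
          by_contra h
          have he1 : e1 = 1 := by omega
          refine h11 (List.IsPrefix.isInfix ?_)
          rw [hds, he1]
          exact ⟨e2 :: ds', rfl⟩
        have he2' : e2 = 0 := by
          by_contra h
          have he2 : e2 = 1 := by omega
          refine h101 ?_
          rw [hds, he1', he2]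
          exact ⟨ds', rfl⟩
        have hDt1 : D (t + 1) ≠ 1 := by rw [hDtop, he1']; omega
        have hDt : D t ≠ 1 := by rw [hDsec, he2']; omega
        have hmt1 : m (t + 1) = [] := by simp only [hmdef]; rw [if_neg hDt1]
        have hmt : m t = [] := by simp only [hmdef]; rw [if_neg hDt]
        have hamt : am t = a := by simp only [hamdef]; rw [if_neg hDt]
        have hadm : AdmSeq φ (t + 2) m am b := by
          refine ⟨hadm1, fun _ => ?_⟩
          rw [show t + 2 - 1 = t + 1 from by omega, hφb]
          simp only [hmdef, hamdef]; rw [if_neg hDt1, if_neg hDt1]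
          exact List.prefix_rfl
        have hexc : ((List.range 2).map
              (fun i => iterW φ (2 - 1 - i) (m (t + 2 - 1 - i)))).flatten
            ++ [am (t + 2 - 2)] ≠ iterW φ 2 [b] := by
          rw [negspec_exc_eq, hmt1, hmt, iterW_nil, hamt, iterW_two_b hφa hφb]
          simp
        have hlenb : (iterW φ (t + 2) [b]).length = fib2 (t + 1) := by
          rw [show t + 2 = t + 1 + 1 from by omega, lenB hφa hφb]
        have hf : fib2 (t + 2 + 1) = fib2 (t + 2) + fib2 (t + 1) := by
          rw [show t + 2 + 1 = t + 1 + 2 from by omega, show t + 2 = t + 1 + 1 from by omega]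
          exact fib2_add_two (t + 1)
        have hsum : (sumLen φ (t + 2) m : ℤ) = n + (iterW φ (t + 2) [b]).length := by
          rw [hlenb]
          rw [← hval, hsumval, hf]
          push_cast
          ring
        have hb1 : sumLen φ (t + 2) m + 2 ≤ fib2 (t + 1) := by
          rw [sumLen_eq hφa hφb hmall, Finset.sum_range_succ, Finset.sum_range_succ,
            hmt1, hmt]
          simp only [List.length_nil, Nat.zero_mul, Nat.add_zero]
          have hle : ∑ j ∈ Finset.range t, (m j).length * fib2 j ≤
              ∑ j ∈ Finset.range t, fib2 j := by
            refine Finset.sum_le_sum fun j _ => ?_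
            rcases hm j with h | h <;> simp [h]
          have := sum_fib2 t
          omega
        have hn : n ≤ -2 := by
          have h1 : (sumLen φ (t + 2) m : ℤ) = n + fib2 (t + 1) := by rw [hsum, hlenb]
          omega
        refine Or.inr (Or.inr (Or.inr ⟨hn, t + 2, m, am, ?_, by rw [hdig]⟩))
        rw [hγm1]
        exact ⟨hdvd, by omega, hadm, hexc, hsum⟩
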